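/- The supremum over t in (0, m] of (t-1)^2 / (t ln t - t + 1) equals (m-1)^2 / (m ln m - m + 1) for any m > 1. -/

import Mathlib

open Real Set

private lemma gpos {x : ℝ} (hx : 0 < x) (hx1 : x ≠ 1) :
    0 < x * Real.log x - x + 1 := by
  have h := Real.log_lt_sub_one_of_pos (inv_pos.2 hx) (by simp [hx1])
  rw [Real.log_inv] at h
  have : 1 - x⁻¹ < Real.log x := by linarith
  have hxx : x * x⁻¹ = 1 := mul_inv_cancel₀ hx.ne'
  nlinarith [mul_lt_mul_of_pos_left this hx]

private lemma gnonneg {x : ℝ} (hx : 0 < x) : 0 ≤ x * Real.log x - x + 1 := by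
  by_cases h : x = 1
  · simp [h]
  · exact (gpos hx h).le

/-- φ(x) = x² - 1 - 2x log x is monotone on (0,∞). -/
private lemma phi_mono : MonotoneOn (fun x : ℝ => x ^ 2 - 1 - 2 * x * Real.log x) (Set.Ioi 0) := by
  have hderiv : ∀ x ∈ interior (Set.Ioi (0:ℝ)),
      HasDerivAt (fun x : ℝ => x ^ 2 - 1 - 2 * x * Real.log x)
        (2 * x - 2 * Real.log x - 2) x := by
    intro x hx
    rw [interior_Ioi] at hx
    have hx0 : (0:ℝ) < x := hx
    have h1 : HasDerivAt (fun x : ℝ => x ^ 2 - 1) (2 * x) x := by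
      simpa using ((hasDerivAt_pow 2 x).sub_const 1)
    have hxne : x ≠ 0 := hx0.ne'
    have h2 : HasDerivAt (fun x : ℝ => 2 * x * Real.log x)
        (2 * (Real.log x + 1)) x := by
      have hid : HasDerivAt (fun y : ℝ => y) 1 x := hasDerivAt_id x
      have := (hid.const_mul (2:ℝ)).mul (Real.hasDerivAt_log hx0.ne')
      refine this.congr_deriv ?_
      field_simp
    have := h1.sub h2
    refine this.congr_deriv ?_
    ring
  apply monotoneOn_of_deriv_nonneg (convex_Ioi 0)
  · exact ContinuousOn.sub (by fun_prop)
      (ContinuousOn.mul (by fun_prop)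
        (Real.continuousOn_log.mono (by intro x hx; exact ne_of_gt hx)))
  · exact fun x hx => (hderiv x hx).differentiableAt.differentiableWithinAt
  · intro x hx
    rw [(hderiv x hx).deriv]
    rw [interior_Ioi] at hx
    have := Real.log_le_sub_one_of_pos (show (0:ℝ) < x from hx)
    linarith

/-- ψ(s) = (s+1) log s - 2(s-1) ≥ 0 for s ≥ 1. -/
private lemma psi_nonneg {s : ℝ} (hs : 1 ≤ s) :
    0 ≤ (s + 1) * Real.log s - 2 * (s - 1) := by
  have hmono : MonotoneOn (fun s : ℝ => (s + 1) * Real.log s - 2 * (s - 1)) (Set.Ici 1) := by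
    have hderiv : ∀ x ∈ interior (Set.Ici (1:ℝ)),
        HasDerivAt (fun s : ℝ => (s + 1) * Real.log s - 2 * (s - 1))
          (Real.log x + x⁻¹ - 1) x := by
      intro x hx
      rw [interior_Ici] at hx
      have hx0 : (0:ℝ) < x := lt_trans one_pos hx
      have h1 : HasDerivAt (fun s : ℝ => (s + 1) * Real.log s)
          (1 * Real.log x + (x + 1) * x⁻¹) x :=
        (((hasDerivAt_id x).add_const 1)).mul (Real.hasDerivAt_log hx0.ne')
      have h2 : HasDerivAt (fun s : ℝ => 2 * (s - 1)) 2 x := by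
        simpa using ((hasDerivAt_id x).sub_const 1).const_mul (2:ℝ)
      have := h1.sub h2
      refine this.congr_deriv ?_
      field_simp
      ring
    apply monotoneOn_of_deriv_nonneg (convex_Ici 1)
    · exact ContinuousOn.sub
        (ContinuousOn.mul (by fun_prop)
          (Real.continuousOn_log.mono (by intro x hx; exact ne_of_gt (lt_of_lt_of_le one_pos hx))))
        (by fun_prop)
    · exact fun x hx => (hderiv x hx).differentiableAt.differentiableWithinAt
    · intro x hx
      rw [(hderiv x hx).deriv]
      rw [interior_Ici] at hx
      have := Real.one_sub_inv_le_log_of_pos (lt_trans one_pos hx)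
      linarith
  have := hmono (Set.self_mem_Ici) hs hs
  simpa using this

/-- f(x) = (x-1)²/(x log x - x + 1) is monotone on (1, ∞). -/
private lemma f_mono :
    MonotoneOn (fun x : ℝ => (x - 1) ^ 2 / (x * Real.log x - x + 1)) (Set.Ioi 1) := by
  have hderiv : ∀ x ∈ interior (Set.Ioi (1:ℝ)),
      HasDerivAt (fun x : ℝ => (x - 1) ^ 2 / (x * Real.log x - x + 1))
        ((2 * (x - 1) * (x * Real.log x - x + 1) - (x - 1) ^ 2 * Real.log x) /
          (x * Real.log x - x + 1) ^ 2) x := by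
    intro x hx
    rw [interior_Ioi] at hx
    have hx0 : (0:ℝ) < x := lt_trans one_pos hx
    have hg : (0:ℝ) < x * Real.log x - x + 1 := gpos hx0 (ne_of_gt hx)
    have h1 : HasDerivAt (fun x : ℝ => (x - 1) ^ 2) (2 * (x - 1)) x := by
      have := ((hasDerivAt_id x).sub_const 1).pow 2
      refine this.congr_deriv ?_
      simp
    have h2 : HasDerivAt (fun x : ℝ => x * Real.log x - x + 1) (Real.log x) x := by
      have ha : HasDerivAt (fun x : ℝ => x * Real.log x)
          (1 * Real.log x + x * x⁻¹) x :=
        (hasDerivAt_id x).mul (Real.hasDerivAt_log hx0.ne')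
      have := (ha.sub (hasDerivAt_id x)).add_const 1
      refine this.congr_deriv ?_
      field_simp
      ring
    exact h1.div h2 hg.ne'
  apply monotoneOn_of_deriv_nonneg (convex_Ioi 1)
  · apply ContinuousOn.div (by fun_prop)
    · exact ContinuousOn.add (ContinuousOn.sub
        (ContinuousOn.mul (by fun_prop)
          (Real.continuousOn_log.mono (fun x hx => ne_of_gt (lt_trans one_pos hx))))
        (by fun_prop)) (by fun_prop)
    · intro x hx
      exact (gpos (lt_trans one_pos hx) (ne_of_gt hx)).ne'
  · exact fun x hx => (hderiv x hx).differentiableAt.differentiableWithinAt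
  · intro x hx
    rw [(hderiv x hx).deriv]
    rw [interior_Ioi] at hx
    have hx0 : (0:ℝ) < x := lt_trans one_pos hx
    have hg : (0:ℝ) < x * Real.log x - x + 1 := gpos hx0 (ne_of_gt hx)
    have hpsi := psi_nonneg hx.le
    apply div_nonneg _ (sq_nonneg _)
    nlinarith [sq_nonneg (x - 1), mul_nonneg (sub_pos.2 hx).le hpsi]

/-- For `m > 1`, the supremum over `t ∈ (0, m]` of
`(t-1)^2 / (t ln t - t + 1)` (with continuous extension value `2` at `t = 1`)
equals `(m-1)^2 / (m ln m - m + 1)`, attained at `t = m`. -/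
theorem stmt0 (m : ℝ) (hm : 1 < m) :
    IsGreatest
      ((fun t : ℝ => if t = 1 then 2 else (t - 1) ^ 2 / (t * Real.log t - t + 1)) ''
        Set.Ioc 0 m)
      ((m - 1) ^ 2 / (m * Real.log m - m + 1)) := by
  have hm0 : (0:ℝ) < m := lt_trans one_pos hm
  have hgm : (0:ℝ) < m * Real.log m - m + 1 := gpos hm0 (ne_of_gt hm)
  have hphi : (0:ℝ) ≤ m ^ 2 - 1 - 2 * m * Real.log m := by
    have := phi_mono (show (1:ℝ) ∈ Set.Ioi 0 by norm_num)
      (show m ∈ Set.Ioi 0 from hm0) hm.le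
    simpa using this
  have h2m : (2:ℝ) ≤ (m - 1) ^ 2 / (m * Real.log m - m + 1) := by
    rw [le_div_iff₀ hgm]
    nlinarith
  constructor
  · exact ⟨m, ⟨hm0, le_refl m⟩, by simp [ne_of_gt hm]⟩
  · rintro y ⟨t, ⟨ht0, htm⟩, rfl⟩
    by_cases ht1 : t = 1
    · simpa [ht1] using h2m
    · simp only [ht1, if_false]
      rcases lt_or_gt_of_ne ht1 with h | h
      · -- t < 1 : f t ≤ 2 ≤ f m
        have hgt : (0:ℝ) < t * Real.log t - t + 1 := gpos ht0 ht1
        have hphit : t ^ 2 - 1 - 2 * t * Real.log t ≤ 0 := by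
          have := phi_mono (show t ∈ Set.Ioi 0 from ht0)
            (show (1:ℝ) ∈ Set.Ioi 0 by norm_num) h.le
          simpa using this
        have : (t - 1) ^ 2 / (t * Real.log t - t + 1) ≤ 2 := by
          rw [div_le_iff₀ hgt]
          nlinarith
        linarith
      · exact f_mono (show t ∈ Set.Ioi 1 from h)
          (show m ∈ Set.Ioi 1 from hm) htm
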